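/- Let λ, c > 0. Define p : ℝ × (0,∞) → ℝ on the open cone {(x,t) : |x| < ct, t > 0} by p(x,t) = λ I₀((λ/c)√(c²t² − x²)) / (2c sinh(λt)). Then p satisfies the one-dimensional telegraph-type equation with time-varying coefficient ∂²p/∂t² + 2λ coth(λt) ∂p/∂t = c² ∂²p/∂x² on the open cone. -/

import Mathlib

open Real

/-- The modified Bessel function of order zero,
`I₀(x) = Σ_{k=0}^∞ (x/2)^{2k} / (k!)²`. -/
noncomputable def besselI0 (x : ℝ) : ℝ :=
  ∑' k : ℕ, (x / 2) ^ (2 * k) / ((k.factorial : ℝ)) ^ 2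


set_option maxHeartbeats 1000000

noncomputable def gg (w : ℝ) : ℝ := ∑' k : ℕ, (1 / ((k.factorial : ℝ))^2) * w ^ k
noncomputable def gg1 (w : ℝ) : ℝ :=
  ∑' k : ℕ, (1 / ((k.factorial : ℝ) * ((k+1).factorial))) * w ^ k
noncomputable def gg2 (w : ℝ) : ℝ :=
  ∑' k : ℕ, (((k:ℝ)+1) / ((((k+1).factorial : ℝ)) * ((k+2).factorial))) * w ^ k

lemma fact_one_le (k : ℕ) : (1:ℝ) ≤ k.factorial := by
  exact_mod_cast Nat.one_le_iff_ne_zero.mpr k.factorial_ne_zero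

lemma a0_bound (k : ℕ) : |1 / ((k.factorial : ℝ))^2| ≤ 1 / (k.factorial : ℝ) := by
  have h := fact_one_le k
  rw [abs_of_nonneg (by positivity)]
  apply one_div_le_one_div_of_le (by linarith)
  nlinarith

lemma a1_bound (k : ℕ) : |1 / ((k.factorial : ℝ) * ((k+1).factorial))| ≤ 1 / (k.factorial : ℝ) := by
  have h := fact_one_le k
  have h1 := fact_one_le (k+1)
  rw [abs_of_nonneg (by positivity)]
  apply one_div_le_one_div_of_le (by linarith)
  nlinarith

lemma a2_bound (k : ℕ) :
    |((k:ℝ)+1) / ((((k+1).factorial : ℝ)) * ((k+2).factorial))| ≤ 1 / (k.factorial : ℝ) := by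
  have h := fact_one_le k
  have h2 := fact_one_le (k+2)
  have hs : ((k+1).factorial : ℝ) = ((k:ℝ)+1) * k.factorial := by
    rw [Nat.factorial_succ]; push_cast; ring
  have hk : (0:ℝ) < (k:ℝ)+1 := by positivity
  rw [abs_of_nonneg (by positivity), hs]
  rw [div_le_div_iff₀ (by nlinarith) (by linarith)]
  nlinarith

lemma summable_aux (a : ℕ → ℝ) (ha : ∀ k, |a k| ≤ 1 / (k.factorial : ℝ)) (w : ℝ) :
    Summable (fun k => a k * w ^ k) := by
  refine Summable.of_norm_bounded
    (Real.summable_pow_div_factorial |w|) (fun k => ?_)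
  simp only [Real.norm_eq_abs, abs_mul, abs_pow]
  calc |a k| * |w| ^ k ≤ (1 / k.factorial) * |w| ^ k := by gcongr; exact ha k
    _ = |w| ^ k / k.factorial := by ring

lemma summable_deriv_aux (R : ℝ) (hR : 1 ≤ R) :
    Summable (fun k : ℕ => (k : ℝ) * R ^ k / k.factorial) := by
  have hR0 : (0:ℝ) ≤ R := le_trans zero_le_one hR
  refine Summable.of_norm_bounded
    (Real.summable_pow_div_factorial (2 * R)) (fun k => ?_)
  have h1 : (k : ℝ) ≤ 2 ^ k := by exact_mod_cast (Nat.lt_two_pow_self (n := k)).le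
  rw [Real.norm_eq_abs, abs_of_nonneg (by positivity)]
  show (k:ℝ) * R ^ k / k.factorial ≤ (2*R) ^ k / k.factorial
  rw [mul_pow]
  gcongr

lemma hasDerivAt_series (a : ℕ → ℝ) (ha : ∀ k, |a k| ≤ 1 / k.factorial) (w : ℝ) :
    HasDerivAt (fun z : ℝ => ∑' k : ℕ, a k * z ^ k)
      (∑' k : ℕ, a k * ((k : ℝ) * w ^ (k - 1))) w := by
  set R : ℝ := |w| + 1 with hR
  have hR1 : 1 ≤ R := by
    have := abs_nonneg w; simp only [hR]; linarith
  refine hasDerivAt_tsum_of_isPreconnected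
    (u := fun k : ℕ => (k : ℝ) * R ^ k / k.factorial)
    (g := fun (k : ℕ) (z : ℝ) => a k * z ^ k)
    (g' := fun (k : ℕ) (y : ℝ) => a k * ((k:ℝ) * y ^ (k-1)))
    (t := Metric.ball (0:ℝ) R) (y₀ := 0)
    (summable_deriv_aux R hR1) Metric.isOpen_ball
    ((convex_ball (0:ℝ) R).isPreconnected)
    (fun k y _ => (hasDerivAt_pow k y).const_mul (a k)) ?_ ?_ ?_ ?_
  · intro k y hy
    have hy' : |y| < R := by simpa [Real.dist_eq] using hy
    rw [Real.norm_eq_abs, abs_mul, abs_mul, abs_pow, Nat.abs_cast]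
    calc |a k| * ((k:ℝ) * |y| ^ (k-1)) ≤ (1/(k.factorial:ℝ)) * ((k:ℝ) * R ^ k) := by
          gcongr
          · exact ha k
          · calc |y| ^ (k-1) ≤ R ^ (k-1) := pow_le_pow_left₀ (abs_nonneg y) hy'.le _
              _ ≤ R ^ k := pow_le_pow_right₀ hR1 (Nat.sub_le k 1)
      _ = (k:ℝ) * R ^ k / k.factorial := by ring
  · simp [Real.dist_eq]; positivity
  · apply summable_of_ne_finset_zero (s := ({0} : Finset ℕ))
    intro k hk
    simp only [Finset.mem_singleton] at hk
    simp [zero_pow hk]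
  · simp only [Metric.mem_ball, Real.dist_eq, sub_zero, hR]
    linarith [abs_nonneg w]

lemma hasDerivAt_gg (w : ℝ) : HasDerivAt gg (gg1 w) w := by
  have h := hasDerivAt_series (fun k => 1 / ((k.factorial : ℝ))^2) a0_bound w
  have hsum : Summable (fun k : ℕ =>
      (1 / (((k:ℕ).factorial : ℝ))^2) * ((k : ℝ) * w ^ (k - 1))) := by
    rw [← summable_nat_add_iff 1]
    apply Summable.congr (summable_aux
      (fun k => 1 / ((k.factorial : ℝ) * ((k+1).factorial))) a1_bound w)
    intro k
    have hs : (((k+1).factorial : ℝ)) = ((k:ℝ)+1) * k.factorial := by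
      rw [Nat.factorial_succ]; push_cast; ring
    have h0 : (k.factorial : ℝ) ≠ 0 := by positivity
    simp only [Nat.add_sub_cancel, hs]
    push_cast
    field_simp
    try ring
  have : (∑' k : ℕ, (1 / (((k:ℕ).factorial : ℝ))^2) * ((k : ℝ) * w ^ (k - 1))) = gg1 w := by
    rw [Summable.tsum_eq_zero_add hsum]
    simp only [Nat.cast_zero, zero_mul, mul_zero, zero_add]
    unfold gg1
    apply tsum_congr
    intro k
    have hs : (((k+1).factorial : ℝ)) = ((k:ℝ)+1) * k.factorial := by
      rw [Nat.factorial_succ]; push_cast; ring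
    have h0 : (k.factorial : ℝ) ≠ 0 := by positivity
    simp only [Nat.add_sub_cancel, hs]
    push_cast
    field_simp
    try ring
  rw [← this]
  exact h

lemma hasDerivAt_gg1 (w : ℝ) : HasDerivAt gg1 (gg2 w) w := by
  have h := hasDerivAt_series
    (fun k => 1 / ((k.factorial : ℝ) * ((k+1).factorial))) a1_bound w
  have hsum : Summable (fun k : ℕ =>
      (1 / (((k:ℕ).factorial : ℝ) * ((k+1).factorial))) * ((k : ℝ) * w ^ (k - 1))) := by
    rw [← summable_nat_add_iff 1]
    apply Summable.congr (summable_aux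
      (fun k => ((k:ℝ)+1) / ((((k+1).factorial : ℝ)) * ((k+2).factorial))) a2_bound w)
    intro k
    have h1 : (((k+1).factorial : ℝ)) ≠ 0 := by positivity
    have h2 : (((k+2).factorial : ℝ)) ≠ 0 := by positivity
    simp only [Nat.add_sub_cancel]
    push_cast
    field_simp
    try ring
  have : (∑' k : ℕ, (1 / (((k:ℕ).factorial : ℝ) * ((k+1).factorial))) * ((k : ℝ) * w ^ (k - 1)))
      = gg2 w := by
    rw [Summable.tsum_eq_zero_add hsum]
    simp only [Nat.cast_zero, zero_mul, mul_zero, zero_add]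
    unfold gg2
    apply tsum_congr
    intro k
    have h1 : (((k+1).factorial : ℝ)) ≠ 0 := by positivity
    have h2 : (((k+2).factorial : ℝ)) ≠ 0 := by positivity
    simp only [Nat.add_sub_cancel]
    push_cast
    field_simp
    try ring
  rw [← this]
  exact h

lemma h_bound (k : ℕ) : |(k:ℝ) / ((k.factorial : ℝ) * ((k+1).factorial)) * 1|
    ≤ 1 / (k.factorial : ℝ) := by
  have h := fact_one_le k
  have hs : (((k+1).factorial : ℝ)) = ((k:ℝ)+1) * k.factorial := by
    rw [Nat.factorial_succ]; push_cast; ring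
  have hk0 : (0:ℝ) ≤ (k:ℝ) := k.cast_nonneg
  rw [mul_one, abs_of_nonneg (by positivity), hs, div_le_div_iff₀ (by nlinarith) (by linarith)]
  nlinarith

lemma gg_ode (w : ℝ) : w * gg2 w + gg1 w = gg w := by
  have hsum2 := summable_aux
    (fun k => ((k:ℝ)+1) / ((((k+1).factorial : ℝ)) * ((k+2).factorial))) a2_bound w
  have hsum1 := summable_aux
    (fun k => 1 / ((k.factorial : ℝ) * ((k+1).factorial))) a1_bound w
  -- h j := j/(j! (j+1)!) * w^j
  have hsumh := summable_aux
    (fun k => (k:ℝ) / ((k.factorial : ℝ) * ((k+1).factorial)) * 1) h_bound w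
  have key : w * gg2 w = ∑' j : ℕ, ((j:ℝ) / ((j.factorial : ℝ) * ((j+1).factorial)) * 1) * w ^ j := by
    rw [Summable.tsum_eq_zero_add hsumh]
    simp only [Nat.cast_zero, zero_div, zero_mul, mul_one, zero_add]
    unfold gg2
    rw [← tsum_mul_left]
    apply tsum_congr
    intro k
    push_cast
    ring
  rw [key]
  unfold gg1 gg
  rw [← Summable.tsum_add hsumh hsum1]
  apply tsum_congr
  intro k
  have hs : (((k+1).factorial : ℝ)) = ((k:ℝ)+1) * k.factorial := by
    rw [Nat.factorial_succ]; push_cast; ring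
  have h0 : (k.factorial : ℝ) ≠ 0 := by positivity
  rw [hs]
  field_simp

lemma besselI0_eq_gg (z : ℝ) : besselI0 z = gg (z^2/4) := by
  unfold besselI0 gg
  apply tsum_congr
  intro k
  rw [pow_mul]
  have : (z/2)^2 = z^2/4 := by ring
  rw [this]
  ring

/-- the law of the projection of `X₃(t)` onto the line,
`p(x,t) = λ I₀((λ/c)√(c²t² - x²)) / (2c sinh(λt))`, satisfies the
one-dimensional telegraph-type equation with time-varying coefficient
`∂²p/∂t² + 2λ coth(λt) ∂p/∂t = c² ∂²p/∂x²` on the open cone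
`{(x,t) : |x| < ct, t > 0}`. -/
theorem statement15 (lam c : ℝ) (hlam : 0 < lam) (hc : 0 < c)
    (p : ℝ → ℝ → ℝ)
    (hp : ∀ x t : ℝ, p x t =
      lam * besselI0 (lam / c * Real.sqrt (c ^ 2 * t ^ 2 - x ^ 2)) /
        (2 * c * Real.sinh (lam * t))) :
    ∀ x t : ℝ, 0 < t → |x| < c * t →
      iteratedDeriv 2 (fun s => p x s) t
        + 2 * lam * (Real.cosh (lam * t) / Real.sinh (lam * t)) *
            deriv (fun s => p x s) t
      = c ^ 2 * iteratedDeriv 2 (fun s => p s t) x := by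
  intro x t ht hxt
  have hc0 : c ≠ 0 := ne_of_gt hc
  -- the time-direction argument function
  set W : ℝ → ℝ := fun s => lam^2/(4*c^2) * (c^2 * s^2 - x^2) with hWdef
  set V : ℝ → ℝ := fun u => lam^2/(4*c^2) * (c^2 * t^2 - u^2) with hVdef
  have hWV : V x = W t := by simp [hWdef, hVdef]
  set q : ℝ → ℝ := fun s => lam * gg (W s) / (2*c*Real.sinh (lam*s)) with hqdef
  set r : ℝ → ℝ := fun u => lam * gg (V u) / (2*c*Real.sinh (lam*t)) with hrdef
  -- open sets
  set U : Set ℝ := {s | 0 < c^2 * s^2 - x^2 ∧ 0 < s} with hUdef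
  have hUopen : IsOpen U := by
    have h1 : IsOpen {s : ℝ | 0 < c^2 * s^2 - x^2} :=
      isOpen_lt continuous_const (by continuity)
    have h2 : IsOpen {s : ℝ | 0 < s} := isOpen_lt continuous_const continuous_id
    exact (h1.inter h2)
  have hxt' := abs_lt.mp hxt
  have htU : t ∈ U := by
    constructor
    · nlinarith [hxt'.1, hxt'.2]
    · exact ht
  set Ux : Set ℝ := {u | 0 < c^2 * t^2 - u^2} with hUxdef
  have hUxopen : IsOpen Ux := isOpen_lt continuous_const (by continuity)
  have hxUx : x ∈ Ux := by
    show 0 < c^2*t^2 - x^2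
    nlinarith [hxt'.1, hxt'.2]
  -- p x ∙ = q on U
  have hpq : ∀ s ∈ U, p x s = q s := by
    intro s hs
    rw [hp x s, hqdef]
    congr 1
    congr 1
    rw [besselI0_eq_gg]
    congr 1
    rw [mul_pow, Real.sq_sqrt (le_of_lt hs.1)]
    simp only [hWdef]
    rw [div_pow]
    field_simp
    try ring
    try exact Or.inl trivial
  have hpr : ∀ u ∈ Ux, p u t = r u := by
    intro u hu
    rw [hp u t, hrdef]
    congr 1
    congr 1
    rw [besselI0_eq_gg]
    congr 1
    rw [mul_pow, Real.sq_sqrt (le_of_lt hu)]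
    simp only [hVdef]
    rw [div_pow]
    field_simp
    try ring
    try exact Or.inl trivial
  -- derivative machinery, time direction
  have hWs : ∀ s : ℝ, HasDerivAt W (lam^2 * s / 2) s := by
    intro s
    have h := (((hasDerivAt_pow 2 s).const_mul (c^2)).sub_const (x^2)).const_mul (lam^2/(4*c^2))
    refine h.congr_deriv ?_
    push_cast
    field_simp
    ring
  have hsinh : ∀ s : ℝ, HasDerivAt (fun s => 2*c*Real.sinh (lam*s)) (2*c*lam*Real.cosh (lam*s)) s := by
    intro s
    have h := ((Real.hasDerivAt_sinh (lam*s)).comp s ((hasDerivAt_id s).const_mul lam)).const_mul (2*c)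
    refine h.congr_deriv ?_
    ring
  set q1 : ℝ → ℝ := fun s =>
    (lam * (gg1 (W s) * (lam^2 * s / 2)) * (2*c*Real.sinh (lam*s))
      - lam * gg (W s) * (2*c*lam*Real.cosh (lam*s))) / (2*c*Real.sinh (lam*s))^2 with hq1def
  have hsinh_pos : ∀ s : ℝ, 0 < s → 0 < Real.sinh (lam*s) := fun s hs =>
    Real.sinh_pos_iff.mpr (by positivity)
  have hq1 : ∀ s : ℝ, 0 < s → HasDerivAt q (q1 s) s := by
    intro s hs
    have hden : (2*c*Real.sinh (lam*s)) ≠ 0 := by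
      have := hsinh_pos s hs; positivity
    have hN : HasDerivAt (fun s' => lam * gg (W s')) (lam * (gg1 (W s) * (lam^2 * s / 2))) s :=
      (((hasDerivAt_gg (W s)).comp s (hWs s))).const_mul lam
    exact hN.div (hsinh s) hden
  -- second derivative at t
  have hden_t : (2*c*Real.sinh (lam*t)) ≠ 0 := by
    have := hsinh_pos t ht; positivity
  have hg1W : HasDerivAt (fun s => gg1 (W s)) (gg2 (W t) * (lam^2 * t / 2)) t :=
    (hasDerivAt_gg1 (W t)).comp t (hWs t)
  have hgW : HasDerivAt (fun s => gg (W s)) (gg1 (W t) * (lam^2 * t / 2)) t :=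
    (hasDerivAt_gg (W t)).comp t (hWs t)
  have hlin : HasDerivAt (fun s : ℝ => lam^2 * s / 2) (lam^2 * 1 / 2) t :=
    (((hasDerivAt_id t).const_mul (lam^2))).div_const 2
  have hcosC : HasDerivAt (fun s => 2*c*lam*Real.cosh (lam*s)) (2*c*lam*(lam*Real.sinh (lam*t))) t := by
    have h := ((Real.hasDerivAt_cosh (lam*t)).comp t ((hasDerivAt_id t).const_mul lam)).const_mul (2*c*lam)
    refine h.congr_deriv ?_
    ring
  have hq1t := (((hg1W.mul hlin).const_mul lam).mul (hsinh t)).sub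
      ((hgW.const_mul lam).mul hcosC) |>.div ((hsinh t).pow 2) (pow_ne_zero 2 hden_t)
  -- space direction
  have hVu : ∀ u : ℝ, HasDerivAt V (-(lam^2 * u) / (2*c^2)) u := by
    intro u
    have h := ((hasDerivAt_pow 2 u).const_sub (c^2*t^2)).const_mul (lam^2/(4*c^2))
    refine h.congr_deriv ?_
    push_cast
    field_simp
    ring
  set r1 : ℝ → ℝ := fun u =>
    lam * (gg1 (V u) * (-(lam^2 * u) / (2*c^2))) / (2*c*Real.sinh (lam*t)) with hr1def
  have hr1 : ∀ u : ℝ, HasDerivAt r (r1 u) u := by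
    intro u
    exact (((hasDerivAt_gg (V u)).comp u (hVu u)).const_mul lam).div_const _
  have hg1V : HasDerivAt (fun u => gg1 (V u)) (gg2 (V x) * (-(lam^2 * x) / (2*c^2))) x :=
    (hasDerivAt_gg1 (V x)).comp x (hVu x)
  have hlin2 : HasDerivAt (fun u : ℝ => -(lam^2 * u) / (2*c^2)) (-(lam^2 * 1) / (2*c^2)) x :=
    (((hasDerivAt_id x).const_mul (lam^2)).neg).div_const (2*c^2)
  have hr2 := (((hg1V.mul hlin2).const_mul lam)).div_const (2*c*Real.sinh (lam*t))
  -- transfer derivatives through eventual equality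
  have hUq : (fun s => p x s) =ᶠ[nhds t] q :=
    Filter.eventuallyEq_of_mem (hUopen.mem_nhds htU) hpq
  have hderiv1 : ∀ s ∈ U, deriv (fun s' => p x s') s = q1 s := by
    intro s hs
    have hEq : (fun s' => p x s') =ᶠ[nhds s] q :=
      Filter.eventuallyEq_of_mem (hUopen.mem_nhds hs) hpq
    exact (((hq1 s hs.2).congr_of_eventuallyEq hEq)).deriv
  have hD1 : deriv (fun s => p x s) t = q1 t := hderiv1 t htU
  have hD2 : iteratedDeriv 2 (fun s => p x s) t = deriv q1 t := by
    rw [iteratedDeriv_succ, iteratedDeriv_one]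
    apply Filter.EventuallyEq.deriv_eq
    exact Filter.eventuallyEq_of_mem (hUopen.mem_nhds htU) hderiv1
  have hderiv1x : ∀ u ∈ Ux, deriv (fun s => p s t) u = r1 u := by
    intro u hu
    have hEq : (fun s => p s t) =ᶠ[nhds u] r :=
      Filter.eventuallyEq_of_mem (hUxopen.mem_nhds hu) hpr
    exact (((hr1 u).congr_of_eventuallyEq hEq)).deriv
  have hD2x : iteratedDeriv 2 (fun s => p s t) x = deriv r1 x := by
    rw [iteratedDeriv_succ, iteratedDeriv_one]
    apply Filter.EventuallyEq.deriv_eq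
    exact Filter.eventuallyEq_of_mem (hUxopen.mem_nhds hxUx) hderiv1x
  rw [hD1, hD2, hD2x, show deriv q1 t = _ from hq1t.deriv, show deriv r1 x = _ from hr2.deriv]
  simp only [Pi.mul_apply, Pi.sub_apply, Pi.div_apply, Pi.pow_apply]
  have hq1teq : q1 t = (lam * (gg1 (W t) * (lam ^ 2 * t / 2)) * (2 * c * Real.sinh (lam * t)) -
      lam * gg (W t) * (2 * c * lam * Real.cosh (lam * t))) / (2 * c * Real.sinh (lam * t)) ^ 2 := rfl
  rw [hq1teq, hWV]
  have hS := hsinh_pos t ht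
  have hS0 : Real.sinh (lam * t) ≠ 0 := ne_of_gt hS
  have hWt : W t = lam ^ 2 / (4 * c ^ 2) * (c ^ 2 * t ^ 2 - x ^ 2) := rfl
  rw [← gg_ode (W t)]
  generalize hGG1 : gg1 (W t) = G1
  generalize hGG2 : gg2 (W t) = G2
  rw [hWt]
  norm_num
  field_simp
  ring
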